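/- Let A ∈ ℂ^{m×n}, let ṽ^(1), …, ṽ^(k) ∈ ℂ^n, let σ̃_1, …, σ̃_k > 0, and let Π denote the orthogonal projection onto the row space of A (the range of A†). Suppose ‖Σ_{ℓ=1}^k (1/σ̃_ℓ²)·ṽ^(ℓ)(ṽ^(ℓ))† A†A − Π‖ ≤ ε/2. Then for any x ∈ ℂ^n in the range of A† and any b ∈ ℂ^m with A†b = A†Ax, the vector x' := Σ_{ℓ=1}^k (⟨ṽ^(ℓ), A†b⟩/σ̃_ℓ²)·ṽ^(ℓ) satisfies ‖x' − x‖ ≤ (ε/2)·‖x‖. -/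

import Mathlib

open Matrix

/-- The continuous linear map on Euclidean spaces induced by a complex matrix. -/
noncomputable def toELin {m n : ℕ} (M : Matrix (Fin m) (Fin n) ℂ) :
    EuclideanSpace ℂ (Fin n) →L[ℂ] EuclideanSpace ℂ (Fin m) :=
  LinearMap.toContinuousLinearMap (Matrix.toEuclideanLin M)

/-- The outer product `v v†` of a vector with itself, as a continuous linear map
`x ↦ ⟨v, x⟩ • v`. -/
noncomputable def outer {n : ℕ} (v : EuclideanSpace ℂ (Fin n)) :
    EuclideanSpace ℂ (Fin n) →L[ℂ] EuclideanSpace ℂ (Fin n) :=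
  (ContinuousLinearMap.toSpanSingleton ℂ v).comp (innerSL ℂ v)

/-- Let `A ∈ ℂ^{m×n}`, `ṽ⁽¹⁾,…,ṽ⁽ᵏ⁾ ∈ ℂ^n`, `σ̃ₗ > 0`, and let `Π` be the
orthogonal projection onto the row space of `A` (the range of `A†`). If
`‖Σₗ (1/σ̃ₗ²)·ṽ⁽ˡ⁾(ṽ⁽ˡ⁾)† A†A − Π‖ ≤ ε/2`, then for any `x` in the range of `A†` and
any `b` with `A†b = A†Ax`, the vector `x' = Σₗ (⟨ṽ⁽ˡ⁾, A†b⟩/σ̃ₗ²)·ṽ⁽ˡ⁾` satisfies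
`‖x' − x‖ ≤ (ε/2)·‖x‖`. -/
theorem stmt_9 {m n k : ℕ} (A : Matrix (Fin m) (Fin n) ℂ)
    (v : Fin k → EuclideanSpace ℂ (Fin n)) (σ : Fin k → ℝ) (hσ : ∀ i, 0 < σ i) (ε : ℝ)
    (h : ‖(∑ ℓ, (((σ ℓ : ℂ)) ^ 2)⁻¹ • (outer (v ℓ)).comp (toELin (Aᴴ * A))) -
        (LinearMap.range (toELin Aᴴ).toLinearMap).subtypeL.comp
          (Submodule.orthogonalProjectionOnto (LinearMap.range (toELin Aᴴ).toLinearMap))‖ ≤ ε / 2)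
    (x : EuclideanSpace ℂ (Fin n)) (hx : x ∈ LinearMap.range (toELin Aᴴ).toLinearMap)
    (b : EuclideanSpace ℂ (Fin m)) (hb : toELin Aᴴ b = toELin (Aᴴ * A) x) :
    ‖(∑ ℓ, ((inner ℂ (v ℓ) (toELin Aᴴ b) : ℂ) / ((σ ℓ : ℂ)) ^ 2) • v ℓ) - x‖ ≤
      ε / 2 * ‖x‖ := by
  set T := (∑ ℓ, (((σ ℓ : ℂ)) ^ 2)⁻¹ • (outer (v ℓ)).comp (toELin (Aᴴ * A))) with hT
  set P := (LinearMap.range (toELin Aᴴ).toLinearMap).subtypeL.comp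
      (Submodule.orthogonalProjectionOnto (LinearMap.range (toELin Aᴴ).toLinearMap)) with hP
  have hPx : P x = x := by
    exact congrArg Subtype.val (Submodule.orthogonalProjectionOnto_mem_subspace_eq_self ⟨x, hx⟩)
  have hTx : T x = ∑ ℓ, ((inner ℂ (v ℓ) (toELin Aᴴ b) : ℂ) / ((σ ℓ : ℂ)) ^ 2) • v ℓ := by
    rw [hT, ContinuousLinearMap.sum_apply]
    refine Finset.sum_congr rfl fun ℓ _ => ?_
    rw [hb]
    simp only [outer, ContinuousLinearMap.comp_apply, ContinuousLinearMap.smul_apply,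
      ContinuousLinearMap.coe_comp', Function.comp_apply, innerSL_apply_apply,
      ContinuousLinearMap.toSpanSingleton_apply, smul_smul, div_eq_inv_mul]
  calc ‖(∑ ℓ, ((inner ℂ (v ℓ) (toELin Aᴴ b) : ℂ) / ((σ ℓ : ℂ)) ^ 2) • v ℓ) - x‖
      = ‖(T - P) x‖ := by rw [ContinuousLinearMap.sub_apply, hTx, hPx]
    _ ≤ ‖T - P‖ * ‖x‖ := (T - P).le_opNorm x
    _ ≤ ε / 2 * ‖x‖ := mul_le_mul_of_nonneg_right h (norm_nonneg x)
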